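/- Let C be a covering of a finite nonempty set U. Then SH satisfies all four matroid closure axioms — (CL1) X ⊆ SH(X); (CL2) X ⊆ Y implies SH(X) ⊆ SH(Y); (CL3) SH(SH(X)) = SH(X); (CL4) y ∈ SH(X ∪ {x}) \ SH(X) implies x ∈ SH(X ∪ {y}) — if and only if the family {I(x) : x ∈ U} of indiscernible neighborhoods forms a partition of U, i.e., for all x, y ∈ U, either I(x) = I(y) or I(x) ∩ I(y) = ∅. -/
import Mathlib


open Set

/-- A covering of a finite nonempty universe `α`: a family of nonempty subsets whose union is everything. -/
def IsCovering {α : Type*} (C : Set (Set α)) : Prop :=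
  (∀ K ∈ C, K.Nonempty) ∧ ⋃₀ C = Set.univ

/-- The second type of covering lower approximation. -/
def SL {α : Type*} (C : Set (Set α)) (X : Set α) : Set α :=
  ⋃₀ {K | K ∈ C ∧ K ⊆ X}

/-- The second type of covering upper approximation. -/
def SH {α : Type*} (C : Set (Set α)) (X : Set α) : Set α :=
  ⋃₀ {K | K ∈ C ∧ (K ∩ X).Nonempty}

/-- The minimal description of a point. -/
def Md {α : Type*} (C : Set (Set α)) (x : α) : Set (Set α) :=
  {K | K ∈ C ∧ x ∈ K ∧ ∀ S ∈ C, x ∈ S → S ⊆ K → S = K}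

/-- A covering is unary if every point has exactly one element in its minimal description. -/
def Unary {α : Type*} (C : Set (Set α)) : Prop :=
  ∀ x : α, ∃! K, K ∈ Md C x

/-- The neighborhood of a point. -/
def Nbhd {α : Type*} (C : Set (Set α)) (x : α) : Set α :=
  ⋂₀ {K | K ∈ C ∧ x ∈ K}

/-- The indiscernible neighborhood of a point. -/
def IndNbhd {α : Type*} (C : Set (Set α)) (x : α) : Set α :=
  ⋃₀ {K | K ∈ C ∧ x ∈ K}

/-- A member of the covering is reducible if it is a union of other members. -/
def Reducible {α : Type*} (C : Set (Set α)) (K : Set α) : Prop :=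
  ∃ D ⊆ C \ {K}, K = ⋃₀ D

/-- The reduct of a covering: its irreducible members. -/
def reduct {α : Type*} (C : Set (Set α)) : Set (Set α) :=
  {K | K ∈ C ∧ ¬ Reducible C K}

/-- The closure operator induced by the fixed point family of `SL`. -/
def clC {α : Type*} (C : Set (Set α)) (X : Set α) : Set α :=
  ⋂₀ {S | SL C S = S ∧ X ⊆ S}


lemma mem_IndNbhd_comm {α : Type*} (C : Set (Set α)) {x y : α} :
    x ∈ IndNbhd C y ↔ y ∈ IndNbhd C x := by
  simp only [IndNbhd, mem_sUnion, mem_setOf_eq]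
  tauto

lemma mem_SH_iff {α : Type*} (C : Set (Set α)) {X : Set α} {y : α} :
    y ∈ SH C X ↔ ∃ z ∈ X, z ∈ IndNbhd C y := by
  simp only [SH, IndNbhd, mem_sUnion, mem_setOf_eq, Set.Nonempty, mem_inter_iff]
  tauto

lemma self_mem_IndNbhd {α : Type*} {C : Set (Set α)} (hC : IsCovering C) (x : α) :
    x ∈ IndNbhd C x := by
  have : x ∈ ⋃₀ C := by rw [hC.2]; trivial
  obtain ⟨K, hK, hxK⟩ := this
  exact ⟨K, ⟨hK, hxK⟩, hxK⟩

theorem stmt_11 {α : Type*} [Fintype α] [Nonempty α] (C : Set (Set α))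
    (hC : IsCovering C) :
    ((∀ X : Set α, X ⊆ SH C X) ∧
     (∀ X Y : Set α, X ⊆ Y → SH C X ⊆ SH C Y) ∧
     (∀ X : Set α, SH C (SH C X) = SH C X) ∧
     (∀ (X : Set α) (x y : α),
        y ∈ SH C (X ∪ {x}) \ SH C X → x ∈ SH C (X ∪ {y}))) ↔
    (∀ x y : α, IndNbhd C x = IndNbhd C y ∨ IndNbhd C x ∩ IndNbhd C y = ∅) := by
  constructor
  · rintro ⟨-, -, h3, -⟩ x y
    by_cases hd : IndNbhd C x ∩ IndNbhd C y = ∅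
    · exact Or.inr hd
    left
    obtain ⟨z, hzx, hzy⟩ := nonempty_iff_ne_empty.mpr hd
    have hSHy : SH C {y} = IndNbhd C y := by
      ext u
      rw [mem_SH_iff]
      simp [mem_IndNbhd_comm C]
    have hfix : SH C (IndNbhd C y) = IndNbhd C y := by
      rw [← hSHy, h3]
    have step : ∀ u v : α, u ∈ IndNbhd C y → v ∈ IndNbhd C u → v ∈ IndNbhd C y := by
      intro u v hu hv
      rw [← hfix, mem_SH_iff]
      exact ⟨u, hu, (mem_IndNbhd_comm C).mpr hv⟩
    have hxy : x ∈ IndNbhd C y := step z x hzy ((mem_IndNbhd_comm C).mpr hzx)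
    ext w
    constructor
    · intro hw
      exact step x w hxy hw
    · intro hw
      -- symmetric: show w ∈ IndNbhd C x using same argument with x,y swapped
      have hSHx : SH C {x} = IndNbhd C x := by
        ext u
        rw [mem_SH_iff]
        simp [mem_IndNbhd_comm C]
      have hfixx : SH C (IndNbhd C x) = IndNbhd C x := by
        rw [← hSHx, h3]
      have stepx : ∀ u v : α, u ∈ IndNbhd C x → v ∈ IndNbhd C u → v ∈ IndNbhd C x := by
        intro u v hu hv
        rw [← hfixx, mem_SH_iff]
        exact ⟨u, hu, (mem_IndNbhd_comm C).mpr hv⟩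
      have hyx : y ∈ IndNbhd C x := stepx z y hzx ((mem_IndNbhd_comm C).mpr hzy)
      exact stepx y w hyx hw
  · intro hpart
    have heq : ∀ u v : α, v ∈ IndNbhd C u → IndNbhd C u = IndNbhd C v := by
      intro u v hv
      rcases hpart u v with h | h
      · exact h
      · exact absurd h (nonempty_iff_ne_empty.mp ⟨v, hv, self_mem_IndNbhd hC v⟩)
    refine ⟨?_, ?_, ?_, ?_⟩
    · intro X x hx
      exact (mem_SH_iff C).mpr ⟨x, hx, self_mem_IndNbhd hC x⟩
    · intro X Y hXY u hu
      obtain ⟨z, hz, hzu⟩ := (mem_SH_iff C).mp hu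
      exact (mem_SH_iff C).mpr ⟨z, hXY hz, hzu⟩
    · intro X
      apply Subset.antisymm
      · intro u hu
        obtain ⟨z, hz, hzu⟩ := (mem_SH_iff C).mp hu
        obtain ⟨w, hw, hwz⟩ := (mem_SH_iff C).mp hz
        have : IndNbhd C u = IndNbhd C z := heq u z hzu
        exact (mem_SH_iff C).mpr ⟨w, hw, this ▸ hwz⟩
      · intro u hu
        exact (mem_SH_iff C).mpr ⟨u, hu, self_mem_IndNbhd hC u⟩
    · intro X x y hy
      obtain ⟨hy1, hy2⟩ := hy
      obtain ⟨z, hz, hzy⟩ := (mem_SH_iff C).mp hy1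
      have hzx : z = x := by
        rcases hz with hz | hz
        · exact absurd ((mem_SH_iff C).mpr ⟨z, hz, hzy⟩) hy2
        · exact hz
      subst hzx
      exact (mem_SH_iff C).mpr ⟨y, Or.inr rfl, (mem_IndNbhd_comm C).mpr hzy⟩
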